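/- Let A be a Banach *-algebra with proper involution and a ∈ A. Then a admits a generalized right group decomposition (a = a₁ + a₂ with a₁*a₂ = a₂a₁ = 0, a₁ right group invertible, a₂ quasinilpotent) if and only if there exists x ∈ A such that x = ax², (a*a²x)* = a*a²x, and lim_{n→∞} ‖aⁿ − axaⁿ‖^{1/n} = 0. -/

import Mathlib

open Filter Topology

/-- `q` is quasinilpotent: `‖qⁿ‖^{1/n} → 0`. -/
def Quasinilpotent {A : Type*} [NormedRing A] (q : A) : Prop :=
  Tendsto (fun n : ℕ => ‖q ^ n‖ ^ (1 / (n : ℝ))) atTop (𝓝 0)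

/-- `y` is a right group inverse of `b`: by² = y, b²y = byb = b. -/
def IsRightGroupInv {A : Type*} [NormedRing A] (b y : A) : Prop :=
  b * y ^ 2 = y ∧ b ^ 2 * y = b ∧ b * y * b = b


private lemma qn_extract {f : ℕ → ℝ} (hf : ∀ n, 0 ≤ f n)
    (h : Tendsto (fun n : ℕ => f n ^ (1 / (n : ℝ))) atTop (𝓝 0))
    {ε : ℝ} (hε : 0 < ε) : ∀ᶠ n : ℕ in atTop, f n ≤ ε ^ n := by
  have h1 : ∀ᶠ n : ℕ in atTop, f n ^ (1 / (n : ℝ)) < ε := h.eventually_lt_const hε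
  filter_upwards [h1, eventually_ge_atTop 1] with n hn hn1
  have hne : (n : ℝ) ≠ 0 := Nat.cast_ne_zero.mpr (by omega)
  have hfn : f n = (f n ^ (1 / (n : ℝ))) ^ n := by
    rw [← Real.rpow_natCast (f n ^ (1 / (n : ℝ))) n, ← Real.rpow_mul (hf n),
      one_div, inv_mul_cancel₀ hne, Real.rpow_one]
  rw [hfn]
  exact pow_le_pow_left₀ (Real.rpow_nonneg (hf n) _) hn.le n

private lemma qn_of_bounds {f : ℕ → ℝ} (hf : ∀ n, 0 ≤ f n)
    (h : ∀ ε : ℝ, 0 < ε → ε < 1 → ∃ C : ℝ, 0 < C ∧ ∀ᶠ n : ℕ in atTop, f n ≤ C * ε ^ n) :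
    Tendsto (fun n : ℕ => f n ^ (1 / (n : ℝ))) atTop (𝓝 0) := by
  rw [Metric.tendsto_atTop]
  intro δ hδ
  have hε0 : (0:ℝ) < min (δ / 2) (1 / 2) := lt_min (by linarith) (by norm_num)
  have hε1 : min (δ / 2) (1 / 2) < 1 := (min_le_right _ _).trans_lt (by norm_num)
  obtain ⟨C, hC, hev⟩ := h _ hε0 hε1
  set ε : ℝ := min (δ / 2) (1 / 2) with hεdef
  have hC1 : Tendsto (fun n : ℕ => C ^ (1 / (n : ℝ))) atTop (𝓝 1) := by
    have h0 : Tendsto (fun n : ℕ => 1 / (n : ℝ)) atTop (𝓝 0) :=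
      tendsto_one_div_atTop_nhds_zero_nat
    have := (tendsto_const_nhds (x := C) (f := (atTop : Filter ℕ))).rpow h0 (Or.inl hC.ne')
    simpa using this
  have hδε : 1 < δ / ε := by
    rw [lt_div_iff₀ hε0]
    have : ε ≤ δ / 2 := min_le_left _ _
    linarith
  have h2 : ∀ᶠ n : ℕ in atTop, C ^ (1 / (n : ℝ)) < δ / ε := hC1.eventually_lt_const hδε
  obtain ⟨N, hN⟩ := eventually_atTop.mp ((hev.and h2).and (eventually_ge_atTop 1))
  refine ⟨N, fun n hn => ?_⟩
  obtain ⟨⟨hb, hc2⟩, h1n⟩ := hN n hn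
  have hne : (n : ℝ) ≠ 0 := Nat.cast_ne_zero.mpr (by omega)
  rw [Real.dist_eq, sub_zero, abs_of_nonneg (Real.rpow_nonneg (hf n) _)]
  have hexp : (0:ℝ) ≤ 1 / (n : ℝ) := by positivity
  calc f n ^ (1 / (n : ℝ)) ≤ (C * ε ^ n) ^ (1 / (n : ℝ)) :=
        Real.rpow_le_rpow (hf n) hb hexp
    _ = C ^ (1 / (n : ℝ)) * (ε ^ n) ^ (1 / (n : ℝ)) :=
        Real.mul_rpow hC.le (pow_nonneg hε0.le n)
    _ = C ^ (1 / (n : ℝ)) * ε := by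
        rw [← Real.rpow_natCast ε n, ← Real.rpow_mul hε0.le, mul_one_div,
          div_self hne, Real.rpow_one]
    _ < (δ / ε) * ε := mul_lt_mul_of_pos_right hc2 hε0
    _ = δ := div_mul_cancel₀ δ hε0.ne'

/-- `a` has a generalized right group decomposition iff there exists `x`
with x = ax², (a*a²x)* = a*a²x and ‖aⁿ − axaⁿ‖^{1/n} → 0. -/
theorem generalized_right_group_decomposition_iff
    {A : Type*} [NormedRing A] [StarRing A] [NormedAlgebra ℂ A] [CompleteSpace A]
    (hproper : ∀ x : A, star x * x = 0 → x = 0) (a : A) :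
    (∃ a₁ a₂ : A, a = a₁ + a₂ ∧ star a₁ * a₂ = 0 ∧ a₂ * a₁ = 0 ∧
        (∃ y : A, IsRightGroupInv a₁ y) ∧ Quasinilpotent a₂) ↔
      (∃ x : A, x = a * x ^ 2 ∧ star (star a * a ^ 2 * x) = star a * a ^ 2 * x ∧
        Tendsto (fun n : ℕ => ‖a ^ n - a * x * a ^ n‖ ^ (1 / (n : ℝ))) atTop (𝓝 0)) := by
  constructor
  · rintro ⟨a₁, a₂, ha, h12, h21, ⟨y, hy1, hy2, hy3⟩, hq⟩
    have h2y : a₂ * y = 0 := by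
      have h : a₂ * (a₁ * y ^ 2) = 0 := by rw [← mul_assoc, h21, zero_mul]
      rwa [hy1] at h
    have h2y2 : a₂ * y ^ 2 = 0 := by rw [pow_two, ← mul_assoc, h2y, zero_mul]
    have hay : a * y = a₁ * y := by rw [ha, add_mul, h2y, add_zero]
    refine ⟨y, ?_, ?_, ?_⟩
    · rw [ha, add_mul, h2y2, add_zero, hy1]
    · have h21' : star a₂ * a₁ = 0 := by
        have := congrArg star h12
        simpa using this
      have hy' : (a₁ + a₂) * y = a₁ * y := by rw [add_mul, h2y, add_zero]
      have hA : a ^ 2 * y = a₁ := by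
        rw [pow_two, mul_assoc, ha, hy', add_mul, ← mul_assoc, ← mul_assoc, h21,
          zero_mul, add_zero, ← pow_two, hy2]
      have hE : star a * (a ^ 2 * y) = star a₁ * a₁ := by
        rw [hA, ha, star_add, add_mul, h21', add_zero]
      rw [mul_assoc, hE, star_mul, star_star]
    · have hp1 : a * y * a₁ = a₁ := by rw [hay, hy3]
      have hpa : a * y * a = a₁ + a * y * a₂ := by
        nth_rewrite 2 [ha]
        rw [mul_add, hp1]
      have hkey : ∀ n : ℕ, a ^ (n + 1) - a * y * a ^ (n + 1)
          = a₂ ^ (n + 1) - a * y * a₂ ^ (n + 1) := by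
        intro n
        induction n with
        | zero =>
          simp only [pow_succ, pow_zero, one_mul]
          rw [hpa]
          nth_rewrite 1 [ha]
          abel
        | succ n ih =>
          have h2a : a₂ ^ (n + 1) * a = a₂ ^ (n + 2) := by
            have hz : a₂ ^ (n + 1) * a₁ = 0 := by rw [pow_succ, mul_assoc, h21, mul_zero]
            rw [ha, mul_add, hz, zero_add, ← pow_succ]
          calc a ^ (n + 2) - a * y * a ^ (n + 2)
              = (a ^ (n + 1) - a * y * a ^ (n + 1)) * a := by
                rw [sub_mul, mul_assoc (a * y) (a ^ (n + 1)) a, ← pow_succ]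
            _ = (a₂ ^ (n + 1) - a * y * a₂ ^ (n + 1)) * a := by rw [ih]
            _ = a₂ ^ (n + 2) - a * y * a₂ ^ (n + 2) := by
                rw [sub_mul, h2a, mul_assoc (a * y) (a₂ ^ (n + 1)) a, h2a]
      refine qn_of_bounds (fun n => norm_nonneg _) ?_
      intro ε hε0 hε1
      refine ⟨‖(1 : A) - a * y‖ + 1, by positivity, ?_⟩
      have hq' : Tendsto (fun n : ℕ => ‖a₂ ^ n‖ ^ (1 / (n : ℝ))) atTop (𝓝 0) := hq
      obtain ⟨N, hN⟩ := eventually_atTop.mp (qn_extract (fun n => norm_nonneg _) hq' hε0)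
      refine eventually_atTop.mpr ⟨N + 1, fun n hn => ?_⟩
      obtain ⟨m, rfl⟩ : ∃ m, n = m + 1 := ⟨n - 1, by omega⟩
      have heq : a ^ (m + 1) - a * y * a ^ (m + 1) = (1 - a * y) * a₂ ^ (m + 1) := by
        rw [hkey m, sub_mul, one_mul]
      rw [heq]
      calc ‖(1 - a * y) * a₂ ^ (m + 1)‖ ≤ ‖(1 : A) - a * y‖ * ‖a₂ ^ (m + 1)‖ :=
            norm_mul_le _ _
        _ ≤ ‖(1 : A) - a * y‖ * ε ^ (m + 1) :=
            mul_le_mul_of_nonneg_left (hN (m + 1) (by omega)) (norm_nonneg _)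
        _ ≤ (‖(1 : A) - a * y‖ + 1) * ε ^ (m + 1) :=
            mul_le_mul_of_nonneg_right (by linarith) (pow_nonneg hε0.le _)
  · rintro ⟨x, hx, hsa, hT⟩
    have hc : ∀ n : ℕ, a ^ n - a * x * a ^ n = (1 - a * x) * a ^ n := by
      intro n; rw [sub_mul, one_mul]
    have hT' : ∀ {ε : ℝ}, 0 < ε → ∀ᶠ n : ℕ in atTop, ‖a ^ n - a * x * a ^ n‖ ≤ ε ^ n :=
      fun hε => qn_extract (fun n => norm_nonneg _) hT hε
    have hxm : ∀ m : ℕ, x ^ (m + 1) = a * x ^ (m + 2) := by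
      intro m
      induction m with
      | zero => simpa using hx
      | succ m ih =>
        calc x ^ (m + 2) = x ^ (m + 1) * x := pow_succ x (m + 1)
          _ = a * x ^ (m + 2) * x := by rw [ih]
          _ = a * x ^ (m + 3) := by rw [mul_assoc, ← pow_succ]
    have hum : ∀ m : ℕ, a ^ (m + 1) * x ^ (m + 1) = a * x := by
      intro m
      induction m with
      | zero => simp
      | succ m ih =>
        calc a ^ (m + 2) * x ^ (m + 2) = a ^ (m + 1) * a * x ^ (m + 2) := by rw [pow_succ]
          _ = a ^ (m + 1) * (a * x ^ (m + 2)) := by rw [mul_assoc]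
          _ = a ^ (m + 1) * x ^ (m + 1) := by rw [← hxm m]
          _ = a * x := ih
    have hL : ∀ k : ℕ, (1 - a * x) * (a ^ k * (a * x)) = 0 := by
      intro k
      have hr0 : (0:ℝ) ≤ ‖x‖ := norm_nonneg x
      have hden : (0:ℝ) < 2 * (‖x‖ + 1) := by positivity
      set ε : ℝ := (2 * (‖x‖ + 1))⁻¹ with hεdef
      have hε0 : 0 < ε := by positivity
      have hε1 : ε ≤ 1 := by
        rw [hεdef]
        exact inv_le_one_of_one_le₀ (by linarith)
      have hεx : ε * ‖x‖ ≤ 1 / 2 := by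
        rw [hεdef, inv_mul_le_iff₀ hden]
        linarith
      have heq : ∀ m : ℕ, (1 - a * x) * (a ^ k * (a * x)) =
          (a ^ (k + (m + 1)) - a * x * a ^ (k + (m + 1))) * x ^ (m + 1) := by
        intro m
        rw [hc]
        calc (1 - a * x) * (a ^ k * (a * x))
            = (1 - a * x) * (a ^ k * (a ^ (m + 1) * x ^ (m + 1))) := by rw [hum m]
          _ = (1 - a * x) * (a ^ k * a ^ (m + 1) * x ^ (m + 1)) := by
              rw [mul_assoc (a ^ k) (a ^ (m + 1)) (x ^ (m + 1))]
          _ = (1 - a * x) * (a ^ (k + (m + 1)) * x ^ (m + 1)) := by rw [← pow_add]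
          _ = (1 - a * x) * a ^ (k + (m + 1)) * x ^ (m + 1) := by
              rw [mul_assoc (1 - a * x) (a ^ (k + (m + 1))) (x ^ (m + 1))]
      obtain ⟨N, hN⟩ := eventually_atTop.mp (hT' hε0)
      have hbound : ∀ᶠ m : ℕ in atTop,
          ‖(1 - a * x) * (a ^ k * (a * x))‖ ≤ (1 / 2 : ℝ) ^ (m + 1) := by
        refine eventually_atTop.mpr ⟨N, fun m hm => ?_⟩
        have h1 : ‖a ^ (k + (m + 1)) - a * x * a ^ (k + (m + 1))‖ ≤ ε ^ (k + (m + 1)) :=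
          hN _ (by omega)
        calc ‖(1 - a * x) * (a ^ k * (a * x))‖
            = ‖(a ^ (k + (m + 1)) - a * x * a ^ (k + (m + 1))) * x ^ (m + 1)‖ := by rw [heq m]
          _ ≤ ‖a ^ (k + (m + 1)) - a * x * a ^ (k + (m + 1))‖ * ‖x ^ (m + 1)‖ :=
              norm_mul_le _ _
          _ ≤ ε ^ (k + (m + 1)) * ‖x‖ ^ (m + 1) :=
              mul_le_mul h1 (norm_pow_le' x (Nat.succ_pos m)) (norm_nonneg _)
                (pow_nonneg hε0.le _)
          _ ≤ ε ^ (m + 1) * ‖x‖ ^ (m + 1) :=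
              mul_le_mul_of_nonneg_right
                (pow_le_pow_of_le_one hε0.le hε1 (by omega)) (pow_nonneg hr0 _)
          _ = (ε * ‖x‖) ^ (m + 1) := (mul_pow ε ‖x‖ (m + 1)).symm
          _ ≤ (1 / 2 : ℝ) ^ (m + 1) := pow_le_pow_left₀ (by positivity) hεx _
      have hhalf : Tendsto (fun m : ℕ => ((1 : ℝ) / 2) ^ (m + 1)) atTop (𝓝 0) := by
        have h := tendsto_pow_atTop_nhds_zero_of_lt_one (by norm_num : (0:ℝ) ≤ 1 / 2)
          (by norm_num : (1:ℝ) / 2 < 1)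
        exact h.comp (tendsto_add_atTop_nat 1)
      exact norm_le_zero_iff.mp (ge_of_tendsto hhalf hbound)
    have h2 : (a * x) * (a * x) = a * x := by
      have h := hL 0
      rw [pow_zero, one_mul, sub_mul, one_mul] at h
      exact (sub_eq_zero.mp h).symm
    have h3 : (a * x) * (a * (a * x)) = a * (a * x) := by
      have h := hL 1
      rw [pow_one, sub_mul, one_mul] at h
      exact (sub_eq_zero.mp h).symm
    have h4 : ∀ n : ℕ, (1 - a * x) * a ^ n * (1 - a * x) = (1 - a * x) * a ^ n := by
      intro n
      rw [mul_one_sub, mul_assoc, hL n, sub_zero]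
    have hδ : star (a * (a * x)) * a = star a * (a * (a * x)) := by
      have h := hsa
      have e1 : star a * a ^ 2 * x = star a * (a * (a * x)) := by
        rw [mul_assoc, pow_two, mul_assoc]
      rw [e1, star_mul, star_star] at h
      exact h
    have hβ : (a * (a * x)) * (a * x) = a * (a * x) := by
      rw [mul_assoc, h2]
    have hss : (a * (a * x)) * (a * (a * x)) = a * (a * (a * x)) := by
      rw [mul_assoc, h3]
    have hsts : star (a * (a * x)) * (a * (a * x)) = star a * (a * (a * x)) := by
      calc star (a * (a * x)) * (a * (a * x))
          = star (a * (a * x)) * a * (a * x) := by rw [mul_assoc]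
        _ = star a * (a * (a * x)) * (a * x) := by rw [hδ]
        _ = star a * ((a * (a * x)) * (a * x)) := by rw [mul_assoc]
        _ = star a * (a * (a * x)) := by rw [hβ]
    have hs2 : a ^ 2 * x = a * (a * x) := by rw [pow_two, mul_assoc]
    have hxx : a * (x * x) = x := by rw [← pow_two]; exact hx.symm
    have hsx : a ^ 2 * x * x = a * x := by rw [hs2, mul_assoc, mul_assoc, hxx]
    refine ⟨a ^ 2 * x, a - a ^ 2 * x, by abel, ?_, ?_, ⟨x, ?_, ?_, ?_⟩, ?_⟩
    · rw [hs2, mul_sub, hδ, hsts, sub_self]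
    · rw [hs2, sub_mul, hss, sub_self]
    · calc a ^ 2 * x * x ^ 2 = a ^ 2 * x * x * x := by rw [pow_two x, ← mul_assoc]
        _ = a * x * x := by rw [hsx]
        _ = x := by rw [mul_assoc, hxx]
    · calc (a ^ 2 * x) ^ 2 * x = a ^ 2 * x * (a ^ 2 * x * x) := by rw [pow_two, mul_assoc]
        _ = a ^ 2 * x * (a * x) := by rw [hsx]
        _ = a ^ 2 * x := by rw [hs2, mul_assoc, h2]
    · calc a ^ 2 * x * x * (a ^ 2 * x) = a * x * (a ^ 2 * x) := by rw [hsx]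
        _ = a ^ 2 * x := by rw [hs2, h3]
    · have has : a - a ^ 2 * x = a * (1 - a * x) := by
        rw [mul_one_sub, ← mul_assoc, ← pow_two]
      have h4' : (1 - a * x) * a * (1 - a * x) = (1 - a * x) * a := by
        have := h4 1; rwa [pow_one] at this
      have hst : ∀ n : ℕ, (a - a ^ 2 * x) ^ (n + 1) = a * ((1 - a * x) * a ^ n) := by
        intro n
        induction n with
        | zero => rw [pow_one, pow_zero, mul_one, has]
        | succ n ih =>
          calc (a - a ^ 2 * x) ^ (n + 2)
              = (a - a ^ 2 * x) ^ (n + 1) * (a - a ^ 2 * x) := by rw [pow_succ]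
            _ = (a * ((1 - a * x) * a ^ n)) * (a * (1 - a * x)) := by rw [ih, has]
            _ = a * ((1 - a * x) * a ^ n * (a * (1 - a * x))) := by
                rw [mul_assoc a ((1 - a * x) * a ^ n) (a * (1 - a * x))]
            _ = a * ((1 - a * x) * a ^ (n + 1) * (1 - a * x)) := by
                rw [← mul_assoc ((1 - a * x) * a ^ n) a (1 - a * x),
                  mul_assoc (1 - a * x) (a ^ n) a, ← pow_succ]
            _ = a * ((1 - a * x) * a ^ (n + 1)) := by rw [h4 (n + 1)]
      show Tendsto (fun n : ℕ => ‖(a - a ^ 2 * x) ^ n‖ ^ (1 / (n : ℝ))) atTop (𝓝 0)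
      refine qn_of_bounds (fun n => norm_nonneg _) ?_
      intro ε hε0 hε1
      refine ⟨‖a‖ / ε + 1, by positivity, ?_⟩
      obtain ⟨N, hN⟩ := eventually_atTop.mp (hT' hε0)
      refine eventually_atTop.mpr ⟨N + 1, fun n hn => ?_⟩
      obtain ⟨m, rfl⟩ : ∃ m, n = m + 1 := ⟨n - 1, by omega⟩
      have hεne : ε ≠ 0 := hε0.ne'
      have hCε : (‖a‖ / ε + 1) * ε ^ (m + 1) = ‖a‖ * ε ^ m + ε ^ (m + 1) := by
        rw [pow_succ']
        field_simp
      calc ‖(a - a ^ 2 * x) ^ (m + 1)‖ = ‖a * ((1 - a * x) * a ^ m)‖ := by rw [hst m]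
        _ ≤ ‖a‖ * ‖(1 - a * x) * a ^ m‖ := norm_mul_le _ _
        _ = ‖a‖ * ‖a ^ m - a * x * a ^ m‖ := by rw [← hc m]
        _ ≤ ‖a‖ * ε ^ m := mul_le_mul_of_nonneg_left (hN m (by omega)) (norm_nonneg a)
        _ ≤ (‖a‖ / ε + 1) * ε ^ (m + 1) := by
            rw [hCε]
            have := pow_nonneg hε0.le (m + 1)
            linarith
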